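/- Let a > 0 and let B be the closed ball of radius a centered at 0 in ℝ². Let K : ℝ² → ℝ² → ℂ be a kernel satisfying K(x, y) = K(y, x) and conj(K(x, y)) = K(x, −y) for all x, y ∈ B. Let Ψ : ℝ² → ℂ be measurable with 0 < ∫_B |Ψ|² < ∞, suppose the function (x, y) ↦ K(x, y)·Ψ(y)·conj(Ψ(x)) is integrable on B × B, and let α ∈ ℂ satisfy α·Ψ(x) = ∫_B K(x, y)·Ψ(y) dy for almost every x ∈ B. If Ψ is odd, i.e. Ψ(−x) = −Ψ(x) for all x, then α is purely imaginary. -/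
import Mathlib

open MeasureTheory

noncomputable section

/-- `ℝ²` as Euclidean space. -/
abbrev E2 := EuclideanSpace ℝ (Fin 2)

/-- an eigenvalue of the apodization integral equation associated
with an odd eigenfunction is purely imaginary. -/
theorem apodization_odd_eigenvalue_imaginary (a : ℝ) (ha : 0 < a) (K : E2 → E2 → ℂ)
    (hsymm : ∀ x ∈ Metric.closedBall (0 : E2) a, ∀ y ∈ Metric.closedBall (0 : E2) a,
      K x y = K y x)
    (hconj : ∀ x ∈ Metric.closedBall (0 : E2) a, ∀ y ∈ Metric.closedBall (0 : E2) a,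
      (starRingEnd ℂ) (K x y) = K x (-y))
    (Ψ : E2 → ℂ) (hmeas : Measurable Ψ)
    (hL2 : IntegrableOn (fun x => ‖Ψ x‖ ^ 2) (Metric.closedBall (0 : E2) a))
    (hpos : 0 < ∫ x in Metric.closedBall (0 : E2) a, ‖Ψ x‖ ^ 2)
    (hker : IntegrableOn
      (fun p : E2 × E2 => K p.1 p.2 * Ψ p.2 * (starRingEnd ℂ) (Ψ p.1))
      ((Metric.closedBall (0 : E2) a) ×ˢ (Metric.closedBall (0 : E2) a)))
    (α : ℂ)
    (heig : ∀ᵐ x ∂(volume.restrict (Metric.closedBall (0 : E2) a)),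
      α * Ψ x = ∫ y in Metric.closedBall (0 : E2) a, K x y * Ψ y)
    (hodd : ∀ x : E2, Ψ (-x) = -Ψ x) :
    α.re = 0 := by
  set B : Set E2 := Metric.closedBall (0 : E2) a with hB
  set μB : Measure E2 := volume.restrict B with hμB
  set f : E2 × E2 → ℂ := fun p => K p.1 p.2 * Ψ p.2 * (starRingEnd ℂ) (Ψ p.1) with hf
  have hBmeas : MeasurableSet B := measurableSet_closedBall
  have hBBmeas : MeasurableSet (B ×ˢ B) := hBmeas.prod hBmeas
  have hprodeq : μB.prod μB = (volume : Measure (E2 × E2)).restrict (B ×ˢ B) := by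
    rw [hμB, Measure.prod_restrict, ← Measure.volume_eq_prod]
  have hf2 : Integrable f (μB.prod μB) := by rw [hprodeq]; exact hker
  set I : ℂ := ∫ p, f p ∂(μB.prod μB) with hI
  set N : ℝ := ∫ x in B, ‖Ψ x‖ ^ 2 with hN
  -- Step A : I = α * N
  have hstepA : I = α * (N : ℂ) := by
    rw [hI, integral_prod f hf2]
    have h1 : ∀ x : E2, (∫ y, f (x, y) ∂μB) = (∫ y, K x y * Ψ y ∂μB) * (starRingEnd ℂ) (Ψ x) := by
      intro x
      rw [← integral_mul_const]
    simp only [h1]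
    have h2 : (∫ x, (∫ y, K x y * Ψ y ∂μB) * (starRingEnd ℂ) (Ψ x) ∂μB)
        = ∫ x, α * ((‖Ψ x‖ ^ 2 : ℝ) : ℂ) ∂μB := by
      refine integral_congr_ae ?_
      filter_upwards [heig] with x hx
      rw [← hx, mul_assoc, Complex.mul_conj']
      push_cast
      ring
    rw [h2, integral_const_mul]
    congr 1
    rw [hN]
    exact integral_ofReal
  -- negation preserves μB
  have hnegB : (fun x : E2 => -x) ⁻¹' B = B := by ext x; simp [hB]
  have hnegMP : MeasurePreserving (fun x : E2 => -x) μB μB := by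
    have h := (Measure.measurePreserving_neg (volume : Measure E2)).restrict_preimage
      (s := B) hBmeas
    rwa [hnegB] at h
  -- the transformation T(x,y) = (x, -y)
  set T : (E2 × E2) ≃ᵐ (E2 × E2) :=
    (MeasurableEquiv.refl E2).prodCongr (MeasurableEquiv.neg E2) with hT
  have hTapp : ∀ p : E2 × E2, T p = (p.1, -p.2) := fun p => rfl
  have hTMP : MeasurePreserving (⇑T) (μB.prod μB) (μB.prod μB) :=
    (MeasurePreserving.id μB).prod hnegMP
  -- Step B : conj I = -I
  have hstepB : (starRingEnd ℂ) I = -I := by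
    have h1 : (starRingEnd ℂ) I = ∫ p, (starRingEnd ℂ) (f p) ∂(μB.prod μB) :=
      (integral_conj).symm
    have h2 : (∫ p, (starRingEnd ℂ) (f p) ∂(μB.prod μB))
        = ∫ p, (starRingEnd ℂ) (f (T p)) ∂(μB.prod μB) :=
      (hTMP.integral_comp' (fun p => (starRingEnd ℂ) (f p))).symm
    have h3 : (∫ p, (starRingEnd ℂ) (f (T p)) ∂(μB.prod μB))
        = ∫ p, -(f (Prod.swap p)) ∂(μB.prod μB) := by
      refine integral_congr_ae ?_
      rw [hprodeq]
      refine ae_restrict_of_forall_mem hBBmeas ?_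
      rintro ⟨x, y⟩ ⟨hx, hy⟩
      have hny : -y ∈ B := by
        have : y ∈ (fun x : E2 => -x) ⁻¹' B := by rw [hnegB]; exact hy
        simpa using this
      dsimp only
      rw [hTapp]
      simp only [hf, Prod.swap]
      rw [map_mul, map_mul, hconj x hx (-y) hny, neg_neg, hodd y, map_neg,
        Complex.conj_conj, hsymm y hy x hx]
      ring
    have h4 : (∫ p, -(f (Prod.swap p)) ∂(μB.prod μB)) = -I := by
      rw [integral_neg, hI]
      congr 1
      exact Measure.measurePreserving_swap.integral_comp
        MeasurableEquiv.prodComm.measurableEmbedding f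
    rw [h1, h2, h3, h4]
  -- conclude
  have hIre : I.re = 0 := by
    have h := congrArg Complex.re hstepB
    simp only [Complex.conj_re, Complex.neg_re] at h
    linarith
  rw [hstepA] at hIre
  have hzero : α.re * N = 0 := by
    simpa [Complex.mul_re, Complex.ofReal_re, Complex.ofReal_im] using hIre
  rcases mul_eq_zero.mp hzero with h | h
  · exact h
  · exact absurd h (ne_of_gt hpos)

end
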